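/- Let G be the finite metric graph with eight vertices v₀, a, a′, b, b′, r, l, p and thirteen edges: six edges of length 1, namely v₀–a, v₀–a′, a–a′, v₀–b, v₀–b′, b–b′ (two triangles of side 1 sharing the vertex v₀); six edges of length √3, namely a–b, a–r, b–r, a′–b′, a′–l, b′–l (two triangles of side √3); and one edge r–p of length π/2. Then: (i) dim R(G, π²/3) = 0, so π²/3 is not a resonance of G; (ii) dim R(G, 4) = 0, so 4 is not a resonance of G; (iii) dim R(G, π²) = 1, so π² is a resonance of G; and (iv) dim R(G, 4π²/3) = 2, so 4π²/3 is a resonance of G. -/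

import Mathlib

open Real Set Filter Topology

noncomputable section

/-- A finite metric graph: finite vertex and edge sets, each edge `e` has an initial
vertex `o e`, a terminal vertex `t e` and a positive length `L e`, and is identified
with the interval `[0, L e]`.  Every vertex is an endpoint of some edge. -/
structure MetricGraph where
  V : Type
  E : Type
  [fintV : Fintype V]
  [fintE : Fintype E]
  [decV : DecidableEq V]
  [decE : DecidableEq E]
  o : E → V
  t : E → V
  L : E → ℝ
  L_pos : ∀ e, 0 < L e
  noIsolated : ∀ v, ∃ e, o e = v ∨ t e = v

attribute [instance] MetricGraph.fintV MetricGraph.fintE MetricGraph.decV MetricGraph.decE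

namespace MetricGraph

variable (G : MetricGraph)

/-- The source vertex of edge `e` traversed in direction `d`. -/
def esrc (e : G.E) (d : Bool) : G.V := if d then G.o e else G.t e

/-- The destination vertex of edge `e` traversed in direction `d`. -/
def edst (e : G.E) (d : Bool) : G.V := if d then G.t e else G.o e

/-- A cycle in a metric graph: a closed walk which uses no edge twice and repeats no
vertex except that its initial and terminal vertices coincide. -/
structure Cycle where
  n : ℕ
  npos : 0 < n
  edge : Fin n → G.E
  dir : Fin n → Bool
  edge_inj : Function.Injective edge
  vert_inj : Function.Injective fun i => G.esrc (edge i) (dir i)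
  chain : ∀ i : Fin n,
    G.edst (edge i) (dir i) =
      G.esrc (edge ⟨((i : ℕ) + 1) % n, Nat.mod_lt _ npos⟩)
        (dir ⟨((i : ℕ) + 1) % n, Nat.mod_lt _ npos⟩)

/-- The length of a cycle: the sum of the lengths of its edges. -/
def Cycle.length {G : MetricGraph} (c : G.Cycle) : ℝ := ∑ i, G.L (c.edge i)

/-- The cycle `c` lies in the subgraph given by the edge set `S`. -/
def Cycle.inSub {G : MetricGraph} (c : G.Cycle) (S : Set G.E) : Prop := ∀ i, c.edge i ∈ S

/-- The cycle `c` has odd length with respect to `x`: its length is an odd multiple of `x`. -/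
def Cycle.oddLength {G : MetricGraph} (c : G.Cycle) (x : ℝ) : Prop :=
  ∃ m : ℕ, Odd m ∧ c.length = m * x

/-- The initial vertex of a cycle. -/
def Cycle.start {G : MetricGraph} (c : G.Cycle) : G.V :=
  G.esrc (c.edge ⟨0, c.npos⟩) (c.dir ⟨0, c.npos⟩)

/-- The vertices incident to an edge of the edge set `S`, i.e. the vertex set of the
subgraph generated by `S`. -/
def incVerts (S : Set G.E) : Set G.V := {v | ∃ e ∈ S, G.o e = v ∨ G.t e = v}

/-- Two vertices are related iff they are connected through edges of `S`. -/
def connRel (S : Set G.E) : G.V → G.V → Prop :=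
  Relation.EqvGen fun v w => ∃ e ∈ S, G.o e = v ∧ G.t e = w

/-- The connected component of the vertex `v` in the subgraph given by `S`. -/
def component (S : Set G.E) (v : G.V) : Set G.V := {w | G.connRel S v w}

/-- The number of connected components of the subgraph given by the edge set `S`. -/
def beta0 (S : Set G.E) : ℕ := (G.component S '' G.incVerts S).ncard

/-- The first Betti number `|E| - |V| + β₀` of the subgraph given by the edge set `S`. -/
def beta1 (S : Set G.E) : ℤ :=
  (S.ncard : ℤ) - ((G.incVerts S).ncard : ℤ) + (G.beta0 S : ℤ)

/-- The number of connected components of the subgraph given by `S` which contain a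
cycle of odd length with respect to `x`. -/
def beta0odd (S : Set G.E) (x : ℝ) : ℕ :=
  (G.component S '' {v | v ∈ G.incVerts S ∧
    ∃ c : G.Cycle, c.inSub S ∧ c.oddLength x ∧ G.connRel S v c.start}).ncard

/-- The edge set of the subgraph `G_λ`: all edges whose length is a positive integer
multiple of `π / √λ`. -/
def lamEdges (lam : ℝ) : Set G.E :=
  {e | ∃ k : ℕ, 0 < k ∧ G.L e = k * (π / Real.sqrt lam)}

/-- An edgewise given function is continuous at all the vertices of `G`. -/
def ContVert (f : G.E → ℝ → ℂ) : Prop :=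
  (∀ e₁ e₂, G.o e₁ = G.o e₂ → f e₁ 0 = f e₂ 0) ∧
  (∀ e₁ e₂, G.o e₁ = G.t e₂ → f e₁ 0 = f e₂ (G.L e₂)) ∧
  (∀ e₁ e₂, G.t e₁ = G.t e₂ → f e₁ (G.L e₁) = f e₂ (G.L e₂))

/-- The value of an (edgewise given, vertex-continuous) function at the vertex `v`. -/
def vtxVal (f : G.E → ℝ → ℂ) (v : G.V) : ℂ :=
  if h : ∃ e, G.o e = v then f h.choose 0
  else f (G.noIsolated v).choose (G.L ((G.noIsolated v).choose))

/-- `∂_ν f (v)`: the sum of the derivatives at the vertex `v` of the restrictions of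
`f` to the edges incident to `v`, all pointing towards `v`. -/
def normDer (f : G.E → ℝ → ℂ) (v : G.V) : ℂ :=
  (∑ e ∈ Finset.univ.filter fun e => G.t e = v, deriv (f e) (G.L e)) -
    ∑ e ∈ Finset.univ.filter fun e => G.o e = v, deriv (f e) 0

/-- `f` solves `-f'' = μ f` on every edge and is continuous at the vertices.
(A solution of `-f'' = μ f` on `[0, L e]` is identified with its unique extension to a
global solution on `ℝ`.) -/
def IsSol (mu : ℂ) (f : G.E → ℝ → ℂ) : Prop :=
  (∀ e, ContDiff ℝ 2 (f e)) ∧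
  (∀ e, ∀ x : ℝ, deriv (deriv (f e)) x = -mu * f e x) ∧ G.ContVert f

/-- Membership in `ker (-Δ_G - λ)` for the Kirchhoff Laplacian `-Δ_G`. -/
def InKer (lam : ℝ) (f : G.E → ℝ → ℂ) : Prop :=
  G.IsSol (lam : ℂ) f ∧ ∀ v, G.normDer f v = 0

/-- `ker (-Δ_G - λ)` as a set of (edgewise given) functions. -/
def kerSet (lam : ℝ) : Set (G.E → ℝ → ℂ) := {f | G.InKer lam f}

/-- `λ` is an eigenvalue of the Kirchhoff Laplacian `-Δ_G`. -/
def IsEigenvalue (lam : ℝ) : Prop := G.kerSet lam ≠ {0}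

/-- `dim ker (-Δ_G - λ)`. -/
def dimKer (lam : ℝ) : ℕ := Module.finrank ℂ (Submodule.span ℂ (G.kerSet lam))

/-- The resonance eigenspace `R (G, λ)`: all elements of `ker (-Δ_G - λ)` vanishing at
every vertex of `G`. -/
def resSet (lam : ℝ) : Set (G.E → ℝ → ℂ) :=
  {f | G.InKer lam f ∧ ∀ e, f e 0 = 0 ∧ f e (G.L e) = 0}

/-- `λ` is a (real) resonance of `G` iff `R (G, λ) ≠ {0}`. -/
def IsResonance (lam : ℝ) : Prop := G.resSet lam ≠ {0}

/-- `dim R (G, λ)`. -/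
def dimRes (lam : ℝ) : ℕ := Module.finrank ℂ (Submodule.span ℂ (G.resSet lam))

/-- `R_B (G, λ)`: all elements of `ker (-Δ_G - λ)` vanishing at every vertex in `B`. -/
def resSetB (B : Set G.V) (lam : ℝ) : Set (G.E → ℝ → ℂ) :=
  {f | G.InKer lam f ∧ ∀ e, (G.o e ∈ B → f e 0 = 0) ∧ (G.t e ∈ B → f e (G.L e) = 0)}

/-- `dim R_B (G, λ)`. -/
def dimResB (B : Set G.V) (lam : ℝ) : ℕ :=
  Module.finrank ℂ (Submodule.span ℂ (G.resSetB B lam))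

/-- The degree of a vertex (a loop counts twice). -/
def degree (v : G.V) : ℕ := {e | G.o e = v}.ncard + {e | G.t e = v}.ncard

/-- The degree of a vertex inside the subgraph given by the edge set `S`. -/
def degreeIn (S : Set G.E) (v : G.V) : ℕ :=
  {e | e ∈ S ∧ G.o e = v}.ncard + {e | e ∈ S ∧ G.t e = v}.ncard

/-- The edge set of the core of `G`: the largest subgraph without vertices of degree one. -/
def coreEdges : Set G.E := ⋃₀ {S : Set G.E | ∀ v, G.degreeIn S v ≠ 1}

/-- A boundary vertex is a vertex of degree one. -/
def IsBoundaryVertex (v : G.V) : Prop := G.degree v = 1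

/-- A proper core vertex: all edges attached to it belong to the core of `G`. -/
def IsProperCoreVertex (v : G.V) : Prop :=
  ∀ e, G.o e = v ∨ G.t e = v → e ∈ G.coreEdges

/-- The defining property of the function `f^{(l)}` for the Titchmarsh--Weyl matrix:
`f` solves `-f'' = μ f` edgewise, is continuous at the vertices, and satisfies
`∂_ν f (v₀) = 1` and `∂_ν f (v) = 0` for all vertices `v ≠ v₀`. -/
def IsTWsol (mu : ℂ) (v0 : G.V) (f : G.E → ℝ → ℂ) : Prop :=
  G.IsSol mu f ∧ G.normDer f v0 = 1 ∧ ∀ v, v ≠ v0 → G.normDer f v = 0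

open scoped Classical in
/-- The Titchmarsh--Weyl matrix `M_B (μ)` with entries `(M_B (μ))_{k,l} = f^{(l)} (v_k)`
(defined via choice; junk if no `f^{(l)}` exists, i.e. at the eigenvalues). -/
def TW (B : Finset G.V) (mu : ℂ) : Matrix B B ℂ :=
  Matrix.of fun k l : B => if h : ∃ f, G.IsTWsol mu l f then G.vtxVal h.choose k else 0

/-- The cycle `c` has commensurate edges: all ratios of edge lengths are rational. -/
def Commensurate (c : G.Cycle) : Prop :=
  ∀ i j, ∃ q : ℚ, G.L (c.edge i) = q * G.L (c.edge j)

/-- `u_C`: the maximal number such that the length of each edge of the cycle `c` is a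
positive integer multiple of it. -/
def uC (c : G.Cycle) : ℝ :=
  sSup {u : ℝ | 0 < u ∧ ∀ i, ∃ k : ℕ, 0 < k ∧ G.L (c.edge i) = k * u}

/-- `λ_G := inf { π²/u_C² : C a cycle in G with commensurate edges }`, with value `+∞`
if there is no cycle with commensurate edges. -/
def lamThreshold : EReal :=
  sInf {x : EReal | ∃ c : G.Cycle, G.Commensurate c ∧ x = ((π ^ 2 / (G.uC c) ^ 2 : ℝ) : EReal)}

end MetricGraph

section MatrixFun

variable {m : Type} [Fintype m]

/-- The matrix function `M` has a pole of order `n` at `λ`: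
`lim_{z → λ} (z - λ)^n M(z)` exists and is nonzero, while
`lim_{z → λ} (z - λ)^(n+1) M(z) = 0`. -/
def hasPoleOrder (M : ℂ → Matrix m m ℂ) (lam : ℂ) (n : ℕ) : Prop :=
  (∃ A : Matrix m m ℂ, A ≠ 0 ∧
    Filter.Tendsto (fun z => (z - lam) ^ n • M z) (𝓝[≠] lam) (𝓝 A)) ∧
  Filter.Tendsto (fun z => (z - lam) ^ (n + 1) • M z) (𝓝[≠] lam) (𝓝 0)

/-- `λ` is a pole of the matrix function `M`: `M` is analytic on a punctured
neighborhood of `λ` and has a pole of some order `n ≥ 1` at `λ`. -/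
def isPole (M : ℂ → Matrix m m ℂ) (lam : ℂ) : Prop :=
  (∀ᶠ z in 𝓝[≠] lam, ∀ k l, AnalyticAt ℂ (fun w => M w k l) z) ∧
  ∃ n : ℕ, 1 ≤ n ∧ hasPoleOrder M lam n

open scoped Classical in
/-- `Res_λ M := (2πi)⁻¹ ∮_Γ M(μ) dμ`, computed entrywise over a sufficiently small
positively oriented circle `Γ` centered at `λ` (defined via choice as the common value
of the circle integrals over all sufficiently small radii). -/
def matResidue (M : ℂ → Matrix m m ℂ) (lam : ℂ) : Matrix m m ℂ :=
  Matrix.of fun k l =>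
    if h : ∃ c : ℂ, ∀ᶠ R in 𝓝[>] (0 : ℝ),
        (2 * (π : ℂ) * Complex.I)⁻¹ * circleIntegral (fun z => M z k l) lam R = c
    then h.choose else 0

end MatrixFun

/-- The metric graph of Example `ex:example2` (Figure `fig:Hantel1`): vertices
`v₀ = 0`, `a = 1`, `a′ = 2`, `b = 3`, `b′ = 4`, `r = 5`, `l = 6`, `p = 7`; six (dashed)
edges of length `1` forming the two triangles `v₀ a a′` and `v₀ b b′`, six edges of
length `√3` forming the two triangles `a b r` and `a′ b′ l`, and one (dotted) edge
`r–p` of length `π/2`. -/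
def exampleGraph : MetricGraph where
  V := Fin 8
  E := Fin 13
  o := ![0, 0, 1, 0, 0, 3, 1, 1, 3, 2, 2, 4, 5]
  t := ![1, 2, 2, 3, 4, 4, 3, 5, 5, 4, 6, 6, 7]
  L := fun e => if (e : ℕ) < 6 then 1 else if (e : ℕ) < 12 then Real.sqrt 3 else π / 2
  L_pos := by
    intro e
    split_ifs <;> positivity
  noIsolated := by
    intro v
    fin_cases v
    · exact ⟨0, Or.inl rfl⟩
    · exact ⟨0, Or.inr rfl⟩
    · exact ⟨1, Or.inr rfl⟩
    · exact ⟨3, Or.inr rfl⟩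
    · exact ⟨4, Or.inr rfl⟩
    · exact ⟨7, Or.inr rfl⟩
    · exact ⟨10, Or.inr rfl⟩
    · exact ⟨12, Or.inr rfl⟩

namespace S19
open Real

/-- Uniqueness for `-f'' = ω² f` with `f 0 = 0`. -/
lemma ode_unique (ω : ℝ) (hω : 0 < ω) (f : ℝ → ℂ)
    (h1 : ContDiff ℝ 2 f)
    (h2 : ∀ x, deriv (deriv f) x = -((ω:ℂ)^2) * f x)
    (h0 : f 0 = 0) :
    ∀ x, f x = (deriv f 0 / ω) * Real.sin (ω * x) := by
  have hdf : Differentiable ℝ f := h1.differentiable two_ne_zero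
  have h1' : ContDiff ℝ 1 (deriv f) := by
    have := (contDiff_succ_iff_deriv (n := 1)).mp (by exact_mod_cast h1)
    exact this.2.2
  have hdf' : Differentiable ℝ (deriv f) := h1'.differentiable one_ne_zero
  set A : ℝ → ℂ := fun y => f y * (Real.cos (ω*y) : ℂ) - deriv f y * (Real.sin (ω*y) : ℂ) / ω with hA
  set B : ℝ → ℂ := fun y => f y * (Real.sin (ω*y) : ℂ) + deriv f y * (Real.cos (ω*y) : ℂ) / ω with hB
  have hC : ∀ x : ℝ, HasDerivAt (fun y : ℝ => (Real.cos (ω*y) : ℂ)) ((-(ω * Real.sin (ω*x)) : ℝ) : ℂ) x := by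
    intro x
    have h : HasDerivAt (fun y : ℝ => Real.cos (ω*y)) (-(ω * Real.sin (ω*x))) x := by
      have := (Real.hasDerivAt_cos (ω*x)).comp x ((hasDerivAt_id x).const_mul ω)
      exact this.congr_deriv (by ring)
    exact h.ofReal_comp
  have hS : ∀ x : ℝ, HasDerivAt (fun y : ℝ => (Real.sin (ω*y) : ℂ)) ((ω * Real.cos (ω*x) : ℝ) : ℂ) x := by
    intro x
    have h : HasDerivAt (fun y : ℝ => Real.sin (ω*y)) (ω * Real.cos (ω*x)) x := by
      have := (Real.hasDerivAt_sin (ω*x)).comp x ((hasDerivAt_id x).const_mul ω)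
      exact this.congr_deriv (by ring)
    exact h.ofReal_comp
  have hAd : ∀ x, HasDerivAt A 0 x := by
    intro x
    have hfx : HasDerivAt f (deriv f x) x := (hdf x).hasDerivAt
    have hdfx : HasDerivAt (deriv f) (-((ω:ℂ)^2) * f x) x := by
      have := (hdf' x).hasDerivAt
      rwa [h2 x] at this
    have := ((hfx.mul (hC x)).sub (((hdfx.mul (hS x))).div_const (ω:ℂ)))
    have hωC : (ω : ℂ) ≠ 0 := by exact_mod_cast hω.ne'
    refine this.congr_deriv ?_
    push_cast
    field_simp
    ring
  have hBd : ∀ x, HasDerivAt B 0 x := by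
    intro x
    have hfx : HasDerivAt f (deriv f x) x := (hdf x).hasDerivAt
    have hdfx : HasDerivAt (deriv f) (-((ω:ℂ)^2) * f x) x := by
      have := (hdf' x).hasDerivAt
      rwa [h2 x] at this
    have := ((hfx.mul (hS x)).add (((hdfx.mul (hC x))).div_const (ω:ℂ)))
    have hωC : (ω : ℂ) ≠ 0 := by exact_mod_cast hω.ne'
    refine this.congr_deriv ?_
    push_cast
    field_simp
    ring
  have hAc : ∀ x, A x = A 0 :=
    fun x => is_const_of_deriv_eq_zero (fun y => (hAd y).differentiableAt)
      (fun y => (hAd y).deriv) x 0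
  have hBc : ∀ x, B x = B 0 :=
    fun x => is_const_of_deriv_eq_zero (fun y => (hBd y).differentiableAt)
      (fun y => (hBd y).deriv) x 0
  intro x
  have hpy : (Real.sin (ω*x) : ℂ)^2 + (Real.cos (ω*x) : ℂ)^2 = 1 := by
    exact_mod_cast congrArg (Complex.ofReal) (Real.sin_sq_add_cos_sq (ω*x))
  have key : A x * (Real.cos (ω*x) : ℂ) + B x * (Real.sin (ω*x) : ℂ) = f x := by
    rw [hA, hB]
    linear_combination (f x) * hpy
  calc f x = A x * (Real.cos (ω*x) : ℂ) + B x * (Real.sin (ω*x) : ℂ) := key.symm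
    _ = A 0 * (Real.cos (ω*x) : ℂ) + B 0 * (Real.sin (ω*x) : ℂ) := by rw [hAc, hBc]
    _ = (deriv f 0 / ω) * Real.sin (ω * x) := by
        simp [hA, hB, h0]

/-- The basic solution `x ↦ a sin(ω x)`. -/
def sf (a : ℂ) (ω : ℝ) : ℝ → ℂ := fun x => a * (Real.sin (ω * x) : ℂ)

lemma hasDerivAt_sf (a : ℂ) (ω x : ℝ) :
    HasDerivAt (sf a ω) (a * ((ω * Real.cos (ω * x) : ℝ) : ℂ)) x := by
  have h : HasDerivAt (fun y : ℝ => Real.sin (ω * y)) (ω * Real.cos (ω * x)) x := by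
    have := (Real.hasDerivAt_sin (ω * x)).comp x ((hasDerivAt_id x).const_mul ω)
    exact this.congr_deriv (by ring)
  exact h.ofReal_comp.const_mul a

lemma deriv_sf (a : ℂ) (ω x : ℝ) :
    deriv (sf a ω) x = a * ((ω * Real.cos (ω * x) : ℝ) : ℂ) := (hasDerivAt_sf a ω x).deriv

lemma hasDerivAt_cf (b : ℂ) (ω x : ℝ) :
    HasDerivAt (fun y : ℝ => b * (Real.cos (ω * y) : ℂ)) (b * ((-(ω * Real.sin (ω * x)) : ℝ) : ℂ)) x := by
  have h : HasDerivAt (fun y : ℝ => Real.cos (ω * y)) (-(ω * Real.sin (ω * x))) x := by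
    have := (Real.hasDerivAt_cos (ω * x)).comp x ((hasDerivAt_id x).const_mul ω)
    exact this.congr_deriv (by ring)
  exact h.ofReal_comp.const_mul b

lemma contDiff_sf (a : ℂ) (ω : ℝ) : ContDiff ℝ 2 (sf a ω) := by
  unfold sf
  exact contDiff_const.mul
    (Complex.ofRealCLM.contDiff.comp (Real.contDiff_sin.comp (contDiff_const.mul contDiff_id)))

lemma deriv_deriv_sf (a : ℂ) (ω : ℝ) (x : ℝ) :
    deriv (deriv (sf a ω)) x = -((ω : ℂ) ^ 2) * sf a ω x := by
  have h1 : deriv (sf a ω) = fun y => (a * ω) * (Real.cos (ω * y) : ℂ) := by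
    funext y; rw [deriv_sf]; push_cast; ring
  rw [h1, (hasDerivAt_cf (a * (ω:ℂ)) ω x).deriv]
  unfold sf; push_cast; ring

lemma sf_zero (a : ℂ) (ω : ℝ) : sf a ω 0 = 0 := by simp [sf]

lemma contVert_of_vanish (G : MetricGraph) (f : G.E → ℝ → ℂ)
    (h : ∀ e, f e 0 = 0 ∧ f e (G.L e) = 0) : G.ContVert f :=
  ⟨fun e₁ e₂ _ => by rw [(h e₁).1, (h e₂).1],
   fun e₁ e₂ _ => by rw [(h e₁).1, (h e₂).2],
   fun e₁ e₂ _ => by rw [(h e₁).2, (h e₂).2]⟩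

lemma normDer_sf (G : MetricGraph) (a : G.E → ℂ) (ω : ℝ) (v : G.V) :
    G.normDer (fun e => sf (a e) ω) v =
      (ω : ℂ) * ((∑ e ∈ Finset.univ.filter fun e => G.t e = v, a e * (Real.cos (ω * G.L e) : ℂ)) -
        ∑ e ∈ Finset.univ.filter fun e => G.o e = v, a e) := by
  unfold MetricGraph.normDer
  rw [mul_sub, Finset.mul_sum, Finset.mul_sum]
  congr 1
  · refine Finset.sum_congr rfl fun e _ => ?_
    rw [deriv_sf]; push_cast; ring
  · refine Finset.sum_congr rfl fun e _ => ?_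
    rw [deriv_sf]
    norm_num
    ring

end S19


namespace S19
open Real

-- numeric facts
lemma sqrt3_sq : Real.sqrt 3 ^ 2 = 3 := Real.sq_sqrt (by norm_num)
lemma sqrt3_pos : 0 < Real.sqrt 3 := Real.sqrt_pos.mpr (by norm_num)
lemma sqrt3_gt : 1.7 < Real.sqrt 3 := by nlinarith [sqrt3_sq, sqrt3_pos]
lemma sqrt3_lt : Real.sqrt 3 < 1.8 := by nlinarith [sqrt3_sq, sqrt3_pos]

lemma sin_ne_1 {x : ℝ} (h1 : 0 < x) (h2 : x < π) : Real.sin x ≠ 0 :=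
  (Real.sin_pos_of_pos_of_lt_pi h1 h2).ne'

lemma sin_ne_2 {x : ℝ} (h1 : π < x) (h2 : x < 2 * π) : Real.sin x ≠ 0 := by
  have h : 0 < Real.sin (x - π) := Real.sin_pos_of_pos_of_lt_pi (by linarith) (by linarith)
  rw [Real.sin_sub_pi] at h
  intro h0
  rw [h0] at h
  norm_num at h

lemma azero {a : ℂ} {s : ℝ} (h : a * (s : ℂ) = 0) (hs : s ≠ 0) : a = 0 := by
  rcases mul_eq_zero.mp h with h' | h'
  · exact h'
  · exact absurd (Complex.ofReal_eq_zero.mp h') hs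

-- edge lengths
lemma L0 : exampleGraph.L (0 : Fin 13) = 1 := rfl
lemma L1 : exampleGraph.L (1 : Fin 13) = 1 := rfl
lemma L2 : exampleGraph.L (2 : Fin 13) = 1 := rfl
lemma L3 : exampleGraph.L (3 : Fin 13) = 1 := rfl
lemma L4 : exampleGraph.L (4 : Fin 13) = 1 := rfl
lemma L5 : exampleGraph.L (5 : Fin 13) = 1 := rfl
lemma L6 : exampleGraph.L (6 : Fin 13) = Real.sqrt 3 := rfl
lemma L7 : exampleGraph.L (7 : Fin 13) = Real.sqrt 3 := rfl
lemma L8 : exampleGraph.L (8 : Fin 13) = Real.sqrt 3 := rfl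
lemma L9 : exampleGraph.L (9 : Fin 13) = Real.sqrt 3 := rfl
lemma L10 : exampleGraph.L (10 : Fin 13) = Real.sqrt 3 := rfl
lemma L11 : exampleGraph.L (11 : Fin 13) = Real.sqrt 3 := rfl
lemma L12 : exampleGraph.L (12 : Fin 13) = π / 2 := rfl

-- evaluation of the vertex sums
instance decPredT (v : Fin 8) : DecidablePred fun e : Fin 13 => exampleGraph.t e = v :=
  fun e => exampleGraph.decV _ _
instance decPredO (v : Fin 8) : DecidablePred fun e : Fin 13 => exampleGraph.o e = v :=
  fun e => exampleGraph.decV _ _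
lemma sum_t0 (F : Fin 13 → ℂ) :
    ∑ e ∈ Finset.univ.filter (fun e : Fin 13 => exampleGraph.t e = (0 : Fin 8)), F e = 0 := by
  rw [show Finset.univ.filter (fun e : Fin 13 => exampleGraph.t e = (0 : Fin 8)) = (∅ : Finset (Fin 13)) from by decide, Finset.sum_empty]
lemma sum_t1 (F : Fin 13 → ℂ) :
    ∑ e ∈ Finset.univ.filter (fun e : Fin 13 => exampleGraph.t e = (1 : Fin 8)), F e = F 0 := by
  rw [show Finset.univ.filter (fun e : Fin 13 => exampleGraph.t e = (1 : Fin 8)) = ({0} : Finset (Fin 13)) from by decide, Finset.sum_singleton]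
lemma sum_t2 (F : Fin 13 → ℂ) :
    ∑ e ∈ Finset.univ.filter (fun e : Fin 13 => exampleGraph.t e = (2 : Fin 8)), F e = F 1 + F 2 := by
  rw [show Finset.univ.filter (fun e : Fin 13 => exampleGraph.t e = (2 : Fin 8)) = ({1, 2} : Finset (Fin 13)) from by decide, Finset.sum_insert (by decide), Finset.sum_singleton]
lemma sum_t3 (F : Fin 13 → ℂ) :
    ∑ e ∈ Finset.univ.filter (fun e : Fin 13 => exampleGraph.t e = (3 : Fin 8)), F e = F 3 + F 6 := by
  rw [show Finset.univ.filter (fun e : Fin 13 => exampleGraph.t e = (3 : Fin 8)) = ({3, 6} : Finset (Fin 13)) from by decide, Finset.sum_insert (by decide), Finset.sum_singleton]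
lemma sum_t4 (F : Fin 13 → ℂ) :
    ∑ e ∈ Finset.univ.filter (fun e : Fin 13 => exampleGraph.t e = (4 : Fin 8)), F e = F 4 + F 5 + F 9 := by
  rw [show Finset.univ.filter (fun e : Fin 13 => exampleGraph.t e = (4 : Fin 8)) = ({4, 5, 9} : Finset (Fin 13)) from by decide, Finset.sum_insert (by decide), Finset.sum_insert (by decide), Finset.sum_singleton]
  ring
lemma sum_t5 (F : Fin 13 → ℂ) :
    ∑ e ∈ Finset.univ.filter (fun e : Fin 13 => exampleGraph.t e = (5 : Fin 8)), F e = F 7 + F 8 := by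
  rw [show Finset.univ.filter (fun e : Fin 13 => exampleGraph.t e = (5 : Fin 8)) = ({7, 8} : Finset (Fin 13)) from by decide, Finset.sum_insert (by decide), Finset.sum_singleton]
lemma sum_t6 (F : Fin 13 → ℂ) :
    ∑ e ∈ Finset.univ.filter (fun e : Fin 13 => exampleGraph.t e = (6 : Fin 8)), F e = F 10 + F 11 := by
  rw [show Finset.univ.filter (fun e : Fin 13 => exampleGraph.t e = (6 : Fin 8)) = ({10, 11} : Finset (Fin 13)) from by decide, Finset.sum_insert (by decide), Finset.sum_singleton]
lemma sum_t7 (F : Fin 13 → ℂ) :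
    ∑ e ∈ Finset.univ.filter (fun e : Fin 13 => exampleGraph.t e = (7 : Fin 8)), F e = F 12 := by
  rw [show Finset.univ.filter (fun e : Fin 13 => exampleGraph.t e = (7 : Fin 8)) = ({12} : Finset (Fin 13)) from by decide, Finset.sum_singleton]
lemma sum_o0 (F : Fin 13 → ℂ) :
    ∑ e ∈ Finset.univ.filter (fun e : Fin 13 => exampleGraph.o e = (0 : Fin 8)), F e = F 0 + F 1 + F 3 + F 4 := by
  rw [show Finset.univ.filter (fun e : Fin 13 => exampleGraph.o e = (0 : Fin 8)) = ({0, 1, 3, 4} : Finset (Fin 13)) from by decide, Finset.sum_insert (by decide), Finset.sum_insert (by decide), Finset.sum_insert (by decide), Finset.sum_singleton]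
  ring
lemma sum_o1 (F : Fin 13 → ℂ) :
    ∑ e ∈ Finset.univ.filter (fun e : Fin 13 => exampleGraph.o e = (1 : Fin 8)), F e = F 2 + F 6 + F 7 := by
  rw [show Finset.univ.filter (fun e : Fin 13 => exampleGraph.o e = (1 : Fin 8)) = ({2, 6, 7} : Finset (Fin 13)) from by decide, Finset.sum_insert (by decide), Finset.sum_insert (by decide), Finset.sum_singleton]
  ring
lemma sum_o2 (F : Fin 13 → ℂ) :
    ∑ e ∈ Finset.univ.filter (fun e : Fin 13 => exampleGraph.o e = (2 : Fin 8)), F e = F 9 + F 10 := by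
  rw [show Finset.univ.filter (fun e : Fin 13 => exampleGraph.o e = (2 : Fin 8)) = ({9, 10} : Finset (Fin 13)) from by decide, Finset.sum_insert (by decide), Finset.sum_singleton]
lemma sum_o3 (F : Fin 13 → ℂ) :
    ∑ e ∈ Finset.univ.filter (fun e : Fin 13 => exampleGraph.o e = (3 : Fin 8)), F e = F 5 + F 8 := by
  rw [show Finset.univ.filter (fun e : Fin 13 => exampleGraph.o e = (3 : Fin 8)) = ({5, 8} : Finset (Fin 13)) from by decide, Finset.sum_insert (by decide), Finset.sum_singleton]
lemma sum_o4 (F : Fin 13 → ℂ) :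
    ∑ e ∈ Finset.univ.filter (fun e : Fin 13 => exampleGraph.o e = (4 : Fin 8)), F e = F 11 := by
  rw [show Finset.univ.filter (fun e : Fin 13 => exampleGraph.o e = (4 : Fin 8)) = ({11} : Finset (Fin 13)) from by decide, Finset.sum_singleton]
lemma sum_o5 (F : Fin 13 → ℂ) :
    ∑ e ∈ Finset.univ.filter (fun e : Fin 13 => exampleGraph.o e = (5 : Fin 8)), F e = F 12 := by
  rw [show Finset.univ.filter (fun e : Fin 13 => exampleGraph.o e = (5 : Fin 8)) = ({12} : Finset (Fin 13)) from by decide, Finset.sum_singleton]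
lemma sum_o6 (F : Fin 13 → ℂ) :
    ∑ e ∈ Finset.univ.filter (fun e : Fin 13 => exampleGraph.o e = (6 : Fin 8)), F e = 0 := by
  rw [show Finset.univ.filter (fun e : Fin 13 => exampleGraph.o e = (6 : Fin 8)) = (∅ : Finset (Fin 13)) from by decide, Finset.sum_empty]
lemma sum_o7 (F : Fin 13 → ℂ) :
    ∑ e ∈ Finset.univ.filter (fun e : Fin 13 => exampleGraph.o e = (7 : Fin 8)), F e = 0 := by
  rw [show Finset.univ.filter (fun e : Fin 13 => exampleGraph.o e = (7 : Fin 8)) = (∅ : Finset (Fin 13)) from by decide, Finset.sum_empty]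

/-- Sufficient condition for membership in the resonance eigenspace. -/
lemma mem_resSet {lam ω : ℝ} (hω : 0 < ω) (hlam : ω ^ 2 = lam) (a : Fin 13 → ℂ)
    (hvan : ∀ e : Fin 13, a e * (Real.sin (ω * exampleGraph.L e) : ℂ) = 0)
    (hkir : ∀ v : Fin 8,
      (∑ e ∈ Finset.univ.filter (fun e : Fin 13 => exampleGraph.t e = v),
          a e * (Real.cos (ω * exampleGraph.L e) : ℂ)) -
        (∑ e ∈ Finset.univ.filter (fun e : Fin 13 => exampleGraph.o e = v), a e) = 0) :
    (fun e : Fin 13 => sf (a e) ω) ∈ exampleGraph.resSet lam := by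
  have hωc : ((ω : ℂ)) ^ 2 = ((lam : ℝ) : ℂ) := by exact_mod_cast congrArg Complex.ofReal hlam
  have hv : ∀ e : Fin 13, sf (a e) ω 0 = 0 ∧ sf (a e) ω (exampleGraph.L e) = 0 := by
    intro e
    exact ⟨sf_zero _ _, hvan e⟩
  refine ⟨⟨⟨fun e => contDiff_sf _ _, fun e x => ?_, contVert_of_vanish _ _ hv⟩, fun v => ?_⟩, hv⟩
  · show deriv (deriv (sf (a e) ω)) x = -((lam : ℝ) : ℂ) * sf (a e) ω x
    rw [deriv_deriv_sf, hωc]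
  · show exampleGraph.normDer (fun e : exampleGraph.E => sf (a e) ω) v = 0
    refine (normDer_sf exampleGraph a ω v).trans ?_
    exact mul_eq_zero_of_right _ (hkir v)

/-- Every element of the resonance eigenspace has the sine form. -/
lemma resSet_shape {lam ω : ℝ} (hω : 0 < ω) (hlam : ω ^ 2 = lam) (f : Fin 13 → ℝ → ℂ)
    (hf : f ∈ exampleGraph.resSet lam) :
    ∃ a : Fin 13 → ℂ, f = (fun e : Fin 13 => sf (a e) ω) ∧
      (∀ e : Fin 13, a e * (Real.sin (ω * exampleGraph.L e) : ℂ) = 0) ∧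
      (∀ v : Fin 8,
        (∑ e ∈ Finset.univ.filter (fun e : Fin 13 => exampleGraph.t e = v),
            a e * (Real.cos (ω * exampleGraph.L e) : ℂ)) -
          (∑ e ∈ Finset.univ.filter (fun e : Fin 13 => exampleGraph.o e = v), a e) = 0) := by
  obtain ⟨⟨⟨hcd, hode, _⟩, hnd⟩, hvan⟩ := hf
  have hωc : (-((lam : ℝ) : ℂ)) = -((ω : ℂ)) ^ 2 := by
    exact_mod_cast congrArg (fun r : ℝ => -(Complex.ofReal r)) hlam.symm
  refine ⟨fun e => deriv (f e) 0 / ω, ?_, ?_, ?_⟩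
  · funext e x
    exact ode_unique ω hω (f e) (hcd e)
      (fun y => by rw [hode e y, hωc]) (hvan e).1 x
  · intro e
    have h2 := (hvan e).2
    have h1 : f e (exampleGraph.L e) =
        (deriv (f e) 0 / ω) * Real.sin (ω * exampleGraph.L e) :=
      ode_unique ω hω (f e) (hcd e) (fun y => by rw [hode e y, hωc]) (hvan e).1 _
    rw [h2] at h1
    exact h1.symm
  · intro v
    have hF : f = fun e : Fin 13 => sf (deriv (f e) 0 / ω) ω := by
      funext e x
      exact ode_unique ω hω (f e) (hcd e) (fun y => by rw [hode e y, hωc]) (hvan e).1 x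
    have h0 : exampleGraph.normDer (fun e : exampleGraph.E => sf (deriv (f e) 0 / ω) ω) v = 0 := by
      have := hnd v
      rwa [hF] at this
    replace h0 := (normDer_sf exampleGraph (fun e => deriv (f e) 0 / ω) ω v).symm.trans h0
    have := (mul_eq_zero.mp h0).resolve_left (by exact_mod_cast hω.ne' : ((ω : ℂ)) ≠ 0)
    exact this

end S19

set_option maxHeartbeats 1000000 in
/-- Example `ex:example2`: for the graph of Figure `fig:Hantel1`,
(i) `dim R(G, π²/3) = 0` (no resonance), (ii) `dim R(G, 4) = 0` (no resonance),
(iii) `dim R(G, π²) = 1` (resonance), (iv) `dim R(G, 4π²/3) = 2` (resonance). -/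
theorem statement_19 :
    (exampleGraph.dimRes (π ^ 2 / 3) = 0 ∧ ¬ exampleGraph.IsResonance (π ^ 2 / 3)) ∧
    (exampleGraph.dimRes 4 = 0 ∧ ¬ exampleGraph.IsResonance 4) ∧
    (exampleGraph.dimRes (π ^ 2) = 1 ∧ exampleGraph.IsResonance (π ^ 2)) ∧
    (exampleGraph.dimRes (4 * π ^ 2 / 3) = 2 ∧ exampleGraph.IsResonance (4 * π ^ 2 / 3)) := by
  have s3sq := S19.sqrt3_sq
  have s3pos := S19.sqrt3_pos
  have s3gt := S19.sqrt3_gt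
  have s3lt := S19.sqrt3_lt
  have pi31 : (3.141592 : ℝ) < π := Real.pi_gt_d6
  have pi315 : π < 3.15 := Real.pi_lt_d2
  refine ⟨?_, ?_, ?_, ?_⟩
  · -- λ = π²/3
    have hω : (0:ℝ) < π / Real.sqrt 3 := by positivity
    have hlam : (π / Real.sqrt 3) ^ 2 = π ^ 2 / 3 := by rw [div_pow, s3sq]
    have hs1 : Real.sin (π / Real.sqrt 3 * 1) ≠ 0 := by
      apply S19.sin_ne_1 (by positivity)
      rw [mul_one]
      exact div_lt_self Real.pi_pos (by nlinarith)
    have hsp : Real.sin (π / Real.sqrt 3 * (π / 2)) ≠ 0 := by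
      apply S19.sin_ne_1 (by positivity)
      rw [div_mul_eq_mul_div, div_lt_iff₀ s3pos]
      have h1 : π / 2 < Real.sqrt 3 := by nlinarith
      nlinarith [mul_pos Real.pi_pos (sub_pos.mpr h1)]
    have hs3 : π / Real.sqrt 3 * Real.sqrt 3 = π := by field_simp
    have hset : exampleGraph.resSet (π ^ 2 / 3) = {0} := by
      apply Set.eq_singleton_iff_unique_mem.mpr
      refine ⟨?_, ?_⟩
      · have hz : (fun e : Fin 13 => S19.sf ((fun _ : Fin 13 => (0:ℂ)) e) (π / Real.sqrt 3)) = (0 : exampleGraph.E → ℝ → ℂ) := by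
          funext e x; simp [S19.sf]; rfl
        rw [← hz]
        exact S19.mem_resSet hω hlam (fun _ => 0) (fun e => by simp) (fun v => by simp)
      · intro f hf
        obtain ⟨a, hF, hvan, hkir⟩ := S19.resSet_shape hω hlam f hf
        have z0 : a 0 = 0 := S19.azero (by have h := hvan (0 : Fin 13); rwa [S19.L0] at h) hs1
        have z1 : a 1 = 0 := S19.azero (by have h := hvan (1 : Fin 13); rwa [S19.L1] at h) hs1
        have z2 : a 2 = 0 := S19.azero (by have h := hvan (2 : Fin 13); rwa [S19.L2] at h) hs1
        have z3 : a 3 = 0 := S19.azero (by have h := hvan (3 : Fin 13); rwa [S19.L3] at h) hs1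
        have z4 : a 4 = 0 := S19.azero (by have h := hvan (4 : Fin 13); rwa [S19.L4] at h) hs1
        have z5 : a 5 = 0 := S19.azero (by have h := hvan (5 : Fin 13); rwa [S19.L5] at h) hs1
        have z12 : a 12 = 0 := S19.azero (by have h := hvan (12 : Fin 13); rwa [S19.L12] at h) hsp
        have k1 := hkir (1 : Fin 8)
        simp only [S19.sum_t1, S19.sum_o1] at k1
        rw [z0, z2] at k1
        have k3 := hkir (3 : Fin 8)
        simp only [S19.sum_t3, S19.sum_o3] at k3
        rw [S19.L6, hs3, Real.cos_pi] at k3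
        push_cast at k3
        rw [z3, z5] at k3
        have k5 := hkir (5 : Fin 8)
        simp only [S19.sum_t5, S19.sum_o5] at k5
        rw [S19.L7, S19.L8, hs3, Real.cos_pi] at k5
        push_cast at k5
        rw [z12] at k5
        have z6 : a 6 = 0 := by linear_combination (-(1:ℂ)/2) * k1 + (-(1:ℂ)/2) * k3 + ((1:ℂ)/2) * k5
        have z7 : a 7 = 0 := by linear_combination (-(1:ℂ)/2) * k1 + ((1:ℂ)/2) * k3 + (-(1:ℂ)/2) * k5
        have z8 : a 8 = 0 := by linear_combination ((1:ℂ)/2) * k1 + (-(1:ℂ)/2) * k3 + (-(1:ℂ)/2) * k5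
        have k2 := hkir (2 : Fin 8)
        simp only [S19.sum_t2, S19.sum_o2] at k2
        rw [z1, z2] at k2
        have k4 := hkir (4 : Fin 8)
        simp only [S19.sum_t4, S19.sum_o4] at k4
        rw [S19.L9, hs3, Real.cos_pi] at k4
        push_cast at k4
        rw [z4, z5] at k4
        have k6 := hkir (6 : Fin 8)
        simp only [S19.sum_t6, S19.sum_o6] at k6
        rw [S19.L10, S19.L11, hs3, Real.cos_pi] at k6
        push_cast at k6
        have z9 : a 9 = 0 := by linear_combination (-(1:ℂ)/2) * k2 + (-(1:ℂ)/2) * k4 + ((1:ℂ)/2) * k6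
        have z10 : a 10 = 0 := by linear_combination (-(1:ℂ)/2) * k2 + ((1:ℂ)/2) * k4 + (-(1:ℂ)/2) * k6
        have z11 : a 11 = 0 := by linear_combination ((1:ℂ)/2) * k2 + (-(1:ℂ)/2) * k4 + (-(1:ℂ)/2) * k6
        have hz : ∀ e : Fin 13, a e = 0 := by
          intro e
          fin_cases e
          · exact z0
          · exact z1
          · exact z2
          · exact z3
          · exact z4
          · exact z5
          · exact z6
          · exact z7
          · exact z8
          · exact z9
          · exact z10
          · exact z11
          · exact z12
        rw [hF]
        funext e x
        show S19.sf (a e) (π / Real.sqrt 3) x = 0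
        rw [hz e]
        simp [S19.sf]
    refine ⟨?_, fun h => h hset⟩
    show Module.finrank ℂ (Submodule.span ℂ (exampleGraph.resSet (π ^ 2 / 3))) = 0
    rw [hset, Submodule.span_zero_singleton]
    exact finrank_bot ℂ _
  · -- λ = 4
    have hω : (0:ℝ) < 2 := by norm_num
    have hlam : (2:ℝ) ^ 2 = 4 := by norm_num
    have hs1 : Real.sin ((2:ℝ) * 1) ≠ 0 := by
      apply S19.sin_ne_1 (by norm_num)
      rw [mul_one]; linarith
    have hs3 : Real.sin ((2:ℝ) * Real.sqrt 3) ≠ 0 := by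
      apply S19.sin_ne_2
      · nlinarith
      · nlinarith
    have h2p : (2:ℝ) * (π / 2) = π := by ring
    have hset : exampleGraph.resSet 4 = {0} := by
      apply Set.eq_singleton_iff_unique_mem.mpr
      refine ⟨?_, ?_⟩
      · have hz : (fun e : Fin 13 => S19.sf ((fun _ : Fin 13 => (0:ℂ)) e) 2) = (0 : exampleGraph.E → ℝ → ℂ) := by
          funext e x; simp [S19.sf]; rfl
        rw [← hz]
        exact S19.mem_resSet hω hlam (fun _ => 0) (fun e => by simp) (fun v => by simp)
      · intro f hf
        obtain ⟨a, hF, hvan, hkir⟩ := S19.resSet_shape hω hlam f hf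
        have z0 : a 0 = 0 := S19.azero (by have h := hvan (0 : Fin 13); rwa [S19.L0] at h) hs1
        have z1 : a 1 = 0 := S19.azero (by have h := hvan (1 : Fin 13); rwa [S19.L1] at h) hs1
        have z2 : a 2 = 0 := S19.azero (by have h := hvan (2 : Fin 13); rwa [S19.L2] at h) hs1
        have z3 : a 3 = 0 := S19.azero (by have h := hvan (3 : Fin 13); rwa [S19.L3] at h) hs1
        have z4 : a 4 = 0 := S19.azero (by have h := hvan (4 : Fin 13); rwa [S19.L4] at h) hs1
        have z5 : a 5 = 0 := S19.azero (by have h := hvan (5 : Fin 13); rwa [S19.L5] at h) hs1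
        have z6 : a 6 = 0 := S19.azero (by have h := hvan (6 : Fin 13); rwa [S19.L6] at h) hs3
        have z7 : a 7 = 0 := S19.azero (by have h := hvan (7 : Fin 13); rwa [S19.L7] at h) hs3
        have z8 : a 8 = 0 := S19.azero (by have h := hvan (8 : Fin 13); rwa [S19.L8] at h) hs3
        have z9 : a 9 = 0 := S19.azero (by have h := hvan (9 : Fin 13); rwa [S19.L9] at h) hs3
        have z10 : a 10 = 0 := S19.azero (by have h := hvan (10 : Fin 13); rwa [S19.L10] at h) hs3
        have z11 : a 11 = 0 := S19.azero (by have h := hvan (11 : Fin 13); rwa [S19.L11] at h) hs3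
        have k7 := hkir (7 : Fin 8)
        simp only [S19.sum_t7, S19.sum_o7] at k7
        rw [S19.L12, h2p, Real.cos_pi] at k7
        push_cast at k7
        have z12 : a 12 = 0 := by linear_combination (-1:ℂ) * k7
        have hz : ∀ e : Fin 13, a e = 0 := by
          intro e
          fin_cases e
          · exact z0
          · exact z1
          · exact z2
          · exact z3
          · exact z4
          · exact z5
          · exact z6
          · exact z7
          · exact z8
          · exact z9
          · exact z10
          · exact z11
          · exact z12
        rw [hF]
        funext e x
        show S19.sf (a e) 2 x = 0
        rw [hz e]
        simp [S19.sf]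
    refine ⟨?_, fun h => h hset⟩
    show Module.finrank ℂ (Submodule.span ℂ (exampleGraph.resSet 4)) = 0
    rw [hset, Submodule.span_zero_singleton]
    exact finrank_bot ℂ _
  · -- λ = π²
    have hs3 : Real.sin (π * Real.sqrt 3) ≠ 0 := by
      apply S19.sin_ne_2
      · nlinarith [mul_pos Real.pi_pos (show (0:ℝ) < Real.sqrt 3 - 1 by nlinarith)]
      · nlinarith [mul_pos Real.pi_pos (show (0:ℝ) < 2 - Real.sqrt 3 by nlinarith)]
    have hsp : Real.sin (π * (π / 2)) ≠ 0 := by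
      apply S19.sin_ne_2
      · nlinarith [mul_pos Real.pi_pos (show (0:ℝ) < π / 2 - 1 by linarith)]
      · nlinarith [mul_pos Real.pi_pos (show (0:ℝ) < 2 - π / 2 by linarith)]
    have V3 : ∀ e : Fin 13, (![1,1,-1,-1,-1,1,0,0,0,0,0,0,0] : Fin 13 → ℂ) e * (Real.sin (π * exampleGraph.L e) : ℂ) = 0 := by
      intro e
      fin_cases e
      · show (1:ℂ) * (Real.sin (π * (1:ℝ)) : ℂ) = 0
        rw [mul_one, Real.sin_pi]
        simp
      · show (1:ℂ) * (Real.sin (π * (1:ℝ)) : ℂ) = 0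
        rw [mul_one, Real.sin_pi]
        simp
      · show (-1:ℂ) * (Real.sin (π * (1:ℝ)) : ℂ) = 0
        rw [mul_one, Real.sin_pi]
        simp
      · show (-1:ℂ) * (Real.sin (π * (1:ℝ)) : ℂ) = 0
        rw [mul_one, Real.sin_pi]
        simp
      · show (-1:ℂ) * (Real.sin (π * (1:ℝ)) : ℂ) = 0
        rw [mul_one, Real.sin_pi]
        simp
      · show (1:ℂ) * (Real.sin (π * (1:ℝ)) : ℂ) = 0
        rw [mul_one, Real.sin_pi]
        simp
      · exact zero_mul _
      · exact zero_mul _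
      · exact zero_mul _
      · exact zero_mul _
      · exact zero_mul _
      · exact zero_mul _
      · exact zero_mul _
    have K0 : (∑ e ∈ Finset.univ.filter (fun e : Fin 13 => exampleGraph.t e = (0 : Fin 8)), (![1,1,-1,-1,-1,1,0,0,0,0,0,0,0] : Fin 13 → ℂ) e * (Real.cos (π * exampleGraph.L e) : ℂ)) - (∑ e ∈ Finset.univ.filter (fun e : Fin 13 => exampleGraph.o e = (0 : Fin 8)), (![1,1,-1,-1,-1,1,0,0,0,0,0,0,0] : Fin 13 → ℂ) e) = 0 := by
      simp only [S19.sum_t0, S19.sum_o0]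
      show (0:ℂ) - ((1:ℂ) + (1:ℂ) + (-1:ℂ) + (-1:ℂ)) = 0
      ring
    have K1 : (∑ e ∈ Finset.univ.filter (fun e : Fin 13 => exampleGraph.t e = (1 : Fin 8)), (![1,1,-1,-1,-1,1,0,0,0,0,0,0,0] : Fin 13 → ℂ) e * (Real.cos (π * exampleGraph.L e) : ℂ)) - (∑ e ∈ Finset.univ.filter (fun e : Fin 13 => exampleGraph.o e = (1 : Fin 8)), (![1,1,-1,-1,-1,1,0,0,0,0,0,0,0] : Fin 13 → ℂ) e) = 0 := by
      simp only [S19.sum_t1, S19.sum_o1]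
      show (1:ℂ) * (Real.cos (π * (1:ℝ)) : ℂ) - ((-1:ℂ) + (0:ℂ) + (0:ℂ)) = 0
      rw [mul_one, Real.cos_pi]
      push_cast
      ring
    have K2 : (∑ e ∈ Finset.univ.filter (fun e : Fin 13 => exampleGraph.t e = (2 : Fin 8)), (![1,1,-1,-1,-1,1,0,0,0,0,0,0,0] : Fin 13 → ℂ) e * (Real.cos (π * exampleGraph.L e) : ℂ)) - (∑ e ∈ Finset.univ.filter (fun e : Fin 13 => exampleGraph.o e = (2 : Fin 8)), (![1,1,-1,-1,-1,1,0,0,0,0,0,0,0] : Fin 13 → ℂ) e) = 0 := by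
      simp only [S19.sum_t2, S19.sum_o2]
      show (1:ℂ) * (Real.cos (π * (1:ℝ)) : ℂ) + (-1:ℂ) * (Real.cos (π * (1:ℝ)) : ℂ) - ((0:ℂ) + (0:ℂ)) = 0
      ring
    have K3 : (∑ e ∈ Finset.univ.filter (fun e : Fin 13 => exampleGraph.t e = (3 : Fin 8)), (![1,1,-1,-1,-1,1,0,0,0,0,0,0,0] : Fin 13 → ℂ) e * (Real.cos (π * exampleGraph.L e) : ℂ)) - (∑ e ∈ Finset.univ.filter (fun e : Fin 13 => exampleGraph.o e = (3 : Fin 8)), (![1,1,-1,-1,-1,1,0,0,0,0,0,0,0] : Fin 13 → ℂ) e) = 0 := by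
      simp only [S19.sum_t3, S19.sum_o3]
      show (-1:ℂ) * (Real.cos (π * (1:ℝ)) : ℂ) + (0:ℂ) * (Real.cos (π * (Real.sqrt 3:ℝ)) : ℂ) - ((1:ℂ) + (0:ℂ)) = 0
      rw [mul_one, Real.cos_pi]
      push_cast
      ring
    have K4 : (∑ e ∈ Finset.univ.filter (fun e : Fin 13 => exampleGraph.t e = (4 : Fin 8)), (![1,1,-1,-1,-1,1,0,0,0,0,0,0,0] : Fin 13 → ℂ) e * (Real.cos (π * exampleGraph.L e) : ℂ)) - (∑ e ∈ Finset.univ.filter (fun e : Fin 13 => exampleGraph.o e = (4 : Fin 8)), (![1,1,-1,-1,-1,1,0,0,0,0,0,0,0] : Fin 13 → ℂ) e) = 0 := by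
      simp only [S19.sum_t4, S19.sum_o4]
      show (-1:ℂ) * (Real.cos (π * (1:ℝ)) : ℂ) + (1:ℂ) * (Real.cos (π * (1:ℝ)) : ℂ) + (0:ℂ) * (Real.cos (π * (Real.sqrt 3:ℝ)) : ℂ) - ((0:ℂ)) = 0
      ring
    have K5 : (∑ e ∈ Finset.univ.filter (fun e : Fin 13 => exampleGraph.t e = (5 : Fin 8)), (![1,1,-1,-1,-1,1,0,0,0,0,0,0,0] : Fin 13 → ℂ) e * (Real.cos (π * exampleGraph.L e) : ℂ)) - (∑ e ∈ Finset.univ.filter (fun e : Fin 13 => exampleGraph.o e = (5 : Fin 8)), (![1,1,-1,-1,-1,1,0,0,0,0,0,0,0] : Fin 13 → ℂ) e) = 0 := by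
      simp only [S19.sum_t5, S19.sum_o5]
      show (0:ℂ) * (Real.cos (π * (Real.sqrt 3:ℝ)) : ℂ) + (0:ℂ) * (Real.cos (π * (Real.sqrt 3:ℝ)) : ℂ) - ((0:ℂ)) = 0
      ring
    have K6 : (∑ e ∈ Finset.univ.filter (fun e : Fin 13 => exampleGraph.t e = (6 : Fin 8)), (![1,1,-1,-1,-1,1,0,0,0,0,0,0,0] : Fin 13 → ℂ) e * (Real.cos (π * exampleGraph.L e) : ℂ)) - (∑ e ∈ Finset.univ.filter (fun e : Fin 13 => exampleGraph.o e = (6 : Fin 8)), (![1,1,-1,-1,-1,1,0,0,0,0,0,0,0] : Fin 13 → ℂ) e) = 0 := by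
      simp only [S19.sum_t6, S19.sum_o6]
      show (0:ℂ) * (Real.cos (π * (Real.sqrt 3:ℝ)) : ℂ) + (0:ℂ) * (Real.cos (π * (Real.sqrt 3:ℝ)) : ℂ) - ((0:ℂ)) = 0
      ring
    have K7 : (∑ e ∈ Finset.univ.filter (fun e : Fin 13 => exampleGraph.t e = (7 : Fin 8)), (![1,1,-1,-1,-1,1,0,0,0,0,0,0,0] : Fin 13 → ℂ) e * (Real.cos (π * exampleGraph.L e) : ℂ)) - (∑ e ∈ Finset.univ.filter (fun e : Fin 13 => exampleGraph.o e = (7 : Fin 8)), (![1,1,-1,-1,-1,1,0,0,0,0,0,0,0] : Fin 13 → ℂ) e) = 0 := by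
      simp only [S19.sum_t7, S19.sum_o7]
      show (0:ℂ) * (Real.cos (π * (π/2:ℝ)) : ℂ) - ((0:ℂ)) = 0
      ring
    have hkirg : ∀ v : Fin 8,
        (∑ e ∈ Finset.univ.filter (fun e : Fin 13 => exampleGraph.t e = v),
            (![1,1,-1,-1,-1,1,0,0,0,0,0,0,0] : Fin 13 → ℂ) e * (Real.cos (π * exampleGraph.L e) : ℂ)) -
          (∑ e ∈ Finset.univ.filter (fun e : Fin 13 => exampleGraph.o e = v),
            (![1,1,-1,-1,-1,1,0,0,0,0,0,0,0] : Fin 13 → ℂ) e) = 0 := by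
      intro v
      fin_cases v
      · exact K0
      · exact K1
      · exact K2
      · exact K3
      · exact K4
      · exact K5
      · exact K6
      · exact K7
    have hmem : (fun e : Fin 13 => S19.sf ((![1,1,-1,-1,-1,1,0,0,0,0,0,0,0] : Fin 13 → ℂ) e) π) ∈ exampleGraph.resSet (π ^ 2) :=
      S19.mem_resSet Real.pi_pos rfl _ V3 hkirg
    set g3 : exampleGraph.E → ℝ → ℂ := fun e : Fin 13 => S19.sf ((![1,1,-1,-1,-1,1,0,0,0,0,0,0,0] : Fin 13 → ℂ) e) π with hg3def
    have hne : g3 ≠ 0 := by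
      intro h
      have h2 : (1:ℂ) * (Real.sin (π * (1/2 : ℝ)) : ℂ) = 0 := congrFun (congrFun h (0 : Fin 13)) (1/2 : ℝ)
      rw [show π * (1/2 : ℝ) = π / 2 by ring, Real.sin_pi_div_two] at h2
      norm_num at h2
    have hsub : exampleGraph.resSet (π ^ 2) ⊆ (Submodule.span ℂ {g3} : Submodule ℂ (exampleGraph.E → ℝ → ℂ)) := by
      intro f hf
      obtain ⟨a, hF, hvan, hkir⟩ := S19.resSet_shape Real.pi_pos rfl f hf
      have z6 : a 6 = 0 := S19.azero (by have h := hvan (6 : Fin 13); rwa [S19.L6] at h) hs3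
      have z7 : a 7 = 0 := S19.azero (by have h := hvan (7 : Fin 13); rwa [S19.L7] at h) hs3
      have z8 : a 8 = 0 := S19.azero (by have h := hvan (8 : Fin 13); rwa [S19.L8] at h) hs3
      have z9 : a 9 = 0 := S19.azero (by have h := hvan (9 : Fin 13); rwa [S19.L9] at h) hs3
      have z10 : a 10 = 0 := S19.azero (by have h := hvan (10 : Fin 13); rwa [S19.L10] at h) hs3
      have z11 : a 11 = 0 := S19.azero (by have h := hvan (11 : Fin 13); rwa [S19.L11] at h) hs3
      have z12 : a 12 = 0 := S19.azero (by have h := hvan (12 : Fin 13); rwa [S19.L12] at h) hsp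
      have k0 := hkir (0 : Fin 8)
      simp only [S19.sum_t0, S19.sum_o0] at k0
      have k1 := hkir (1 : Fin 8)
      simp only [S19.sum_t1, S19.sum_o1] at k1
      rw [S19.L0, mul_one, Real.cos_pi] at k1
      push_cast at k1
      rw [z6, z7] at k1
      have k2 := hkir (2 : Fin 8)
      simp only [S19.sum_t2, S19.sum_o2] at k2
      rw [S19.L1, S19.L2, mul_one, Real.cos_pi] at k2
      push_cast at k2
      rw [z9, z10] at k2
      have k3 := hkir (3 : Fin 8)
      simp only [S19.sum_t3, S19.sum_o3] at k3
      rw [S19.L3, mul_one, Real.cos_pi] at k3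
      push_cast at k3
      rw [z6, z8] at k3
      have k4 := hkir (4 : Fin 8)
      simp only [S19.sum_t4, S19.sum_o4] at k4
      rw [S19.L4, S19.L5, mul_one, Real.cos_pi] at k4
      push_cast at k4
      rw [z9, z11] at k4
      have ha2 : a 2 = -a 0 := by linear_combination (-1:ℂ) * k1
      have ha1 : a 1 = a 0 := by linear_combination k1 - k2
      have ha5 : a 5 = a 0 := by linear_combination ((1:ℂ)/2) * (k1 - k2 + k0 - k3 - k4)
      have ha3 : a 3 = -a 0 := by linear_combination (-1:ℂ) * k3 - ha5
      have ha4 : a 4 = -a 0 := by linear_combination (-1:ℂ) * k4 - ha5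
      have he : ∀ e : Fin 13, a e = a 0 * (![1,1,-1,-1,-1,1,0,0,0,0,0,0,0] : Fin 13 → ℂ) e := by
        intro e; fin_cases e
        · show a 0 = a 0 * 1
          ring
        · show a 1 = a 0 * 1
          linear_combination ha1
        · show a 2 = a 0 * (-1)
          linear_combination ha2
        · show a 3 = a 0 * (-1)
          linear_combination ha3
        · show a 4 = a 0 * (-1)
          linear_combination ha4
        · show a 5 = a 0 * 1
          linear_combination ha5
        · show a 6 = a 0 * 0
          linear_combination z6
        · show a 7 = a 0 * 0
          linear_combination z7
        · show a 8 = a 0 * 0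
          linear_combination z8
        · show a 9 = a 0 * 0
          linear_combination z9
        · show a 10 = a 0 * 0
          linear_combination z10
        · show a 11 = a 0 * 0
          linear_combination z11
        · show a 12 = a 0 * 0
          linear_combination z12
      apply Submodule.mem_span_singleton.mpr
      refine ⟨a 0, ?_⟩
      rw [hF]
      funext e x
      show a 0 * ((![1,1,-1,-1,-1,1,0,0,0,0,0,0,0] : Fin 13 → ℂ) e * (Real.sin (π * x) : ℂ)) = a e * (Real.sin (π * x) : ℂ)
      rw [he e]
      ring
    have hspan : Submodule.span ℂ (exampleGraph.resSet (π ^ 2)) = Submodule.span ℂ {g3} :=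
      le_antisymm (Submodule.span_le.mpr hsub)
        (Submodule.span_mono (Set.singleton_subset_iff.mpr hmem))
    refine ⟨?_, ?_⟩
    · show Module.finrank ℂ (Submodule.span ℂ (exampleGraph.resSet (π ^ 2))) = 1
      rw [hspan]
      exact finrank_span_singleton hne
    · show exampleGraph.resSet (π ^ 2) ≠ {0}
      intro h
      rw [h] at hmem
      exact hne (Set.mem_singleton_iff.mp hmem)
  · -- λ = 4π²/3
    have hω : (0:ℝ) < 2 * π / Real.sqrt 3 := by positivity
    have hlam : (2 * π / Real.sqrt 3) ^ 2 = 4 * π ^ 2 / 3 := by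
      rw [div_pow, s3sq]; ring
    have h3eq : 2 * π / Real.sqrt 3 * Real.sqrt 3 = 2 * π := by field_simp
    have hs1 : Real.sin (2 * π / Real.sqrt 3 * 1) ≠ 0 := by
      rw [mul_one]
      apply S19.sin_ne_2
      · rw [lt_div_iff₀ s3pos]
        nlinarith [mul_pos Real.pi_pos (show (0:ℝ) < 2 - Real.sqrt 3 by nlinarith)]
      · rw [div_lt_iff₀ s3pos]
        nlinarith [mul_pos Real.pi_pos (show (0:ℝ) < Real.sqrt 3 - 1 by nlinarith)]
    have hsp : Real.sin (2 * π / Real.sqrt 3 * (π / 2)) ≠ 0 := by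
      rw [show 2 * π / Real.sqrt 3 * (π / 2) = π * π / Real.sqrt 3 by ring]
      apply S19.sin_ne_2
      · rw [lt_div_iff₀ s3pos]
        nlinarith [mul_pos Real.pi_pos (show (0:ℝ) < π - Real.sqrt 3 by nlinarith)]
      · rw [div_lt_iff₀ s3pos]
        nlinarith [mul_pos Real.pi_pos (show (0:ℝ) < 2 * Real.sqrt 3 - π by nlinarith)]
    have hx4 : 2 * π / Real.sqrt 3 * (Real.sqrt 3 / 4) = π / 2 := by
      field_simp
      ring
    have Va : ∀ e : Fin 13, (![0,0,0,0,0,0,1,-1,1,0,0,0,0] : Fin 13 → ℂ) e * (Real.sin (2 * π / Real.sqrt 3 * exampleGraph.L e) : ℂ) = 0 := by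
      intro e
      fin_cases e
      · exact zero_mul _
      · exact zero_mul _
      · exact zero_mul _
      · exact zero_mul _
      · exact zero_mul _
      · exact zero_mul _
      · show (1:ℂ) * (Real.sin (2 * π / Real.sqrt 3 * (Real.sqrt 3:ℝ)) : ℂ) = 0
        rw [h3eq, Real.sin_two_pi]
        simp
      · show (-1:ℂ) * (Real.sin (2 * π / Real.sqrt 3 * (Real.sqrt 3:ℝ)) : ℂ) = 0
        rw [h3eq, Real.sin_two_pi]
        simp
      · show (1:ℂ) * (Real.sin (2 * π / Real.sqrt 3 * (Real.sqrt 3:ℝ)) : ℂ) = 0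
        rw [h3eq, Real.sin_two_pi]
        simp
      · exact zero_mul _
      · exact zero_mul _
      · exact zero_mul _
      · exact zero_mul _
    have Vb : ∀ e : Fin 13, (![0,0,0,0,0,0,0,0,0,1,-1,1,0] : Fin 13 → ℂ) e * (Real.sin (2 * π / Real.sqrt 3 * exampleGraph.L e) : ℂ) = 0 := by
      intro e
      fin_cases e
      · exact zero_mul _
      · exact zero_mul _
      · exact zero_mul _
      · exact zero_mul _
      · exact zero_mul _
      · exact zero_mul _
      · exact zero_mul _
      · exact zero_mul _
      · exact zero_mul _
      · show (1:ℂ) * (Real.sin (2 * π / Real.sqrt 3 * (Real.sqrt 3:ℝ)) : ℂ) = 0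
        rw [h3eq, Real.sin_two_pi]
        simp
      · show (-1:ℂ) * (Real.sin (2 * π / Real.sqrt 3 * (Real.sqrt 3:ℝ)) : ℂ) = 0
        rw [h3eq, Real.sin_two_pi]
        simp
      · show (1:ℂ) * (Real.sin (2 * π / Real.sqrt 3 * (Real.sqrt 3:ℝ)) : ℂ) = 0
        rw [h3eq, Real.sin_two_pi]
        simp
      · exact zero_mul _
    have Ka0 : (∑ e ∈ Finset.univ.filter (fun e : Fin 13 => exampleGraph.t e = (0 : Fin 8)), (![0,0,0,0,0,0,1,-1,1,0,0,0,0] : Fin 13 → ℂ) e * (Real.cos (2 * π / Real.sqrt 3 * exampleGraph.L e) : ℂ)) - (∑ e ∈ Finset.univ.filter (fun e : Fin 13 => exampleGraph.o e = (0 : Fin 8)), (![0,0,0,0,0,0,1,-1,1,0,0,0,0] : Fin 13 → ℂ) e) = 0 := by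
      simp only [S19.sum_t0, S19.sum_o0]
      show (0:ℂ) - ((0:ℂ) + (0:ℂ) + (0:ℂ) + (0:ℂ)) = 0
      ring
    have Ka1 : (∑ e ∈ Finset.univ.filter (fun e : Fin 13 => exampleGraph.t e = (1 : Fin 8)), (![0,0,0,0,0,0,1,-1,1,0,0,0,0] : Fin 13 → ℂ) e * (Real.cos (2 * π / Real.sqrt 3 * exampleGraph.L e) : ℂ)) - (∑ e ∈ Finset.univ.filter (fun e : Fin 13 => exampleGraph.o e = (1 : Fin 8)), (![0,0,0,0,0,0,1,-1,1,0,0,0,0] : Fin 13 → ℂ) e) = 0 := by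
      simp only [S19.sum_t1, S19.sum_o1]
      show (0:ℂ) * (Real.cos (2 * π / Real.sqrt 3 * (1:ℝ)) : ℂ) - ((0:ℂ) + (1:ℂ) + (-1:ℂ)) = 0
      ring
    have Ka2 : (∑ e ∈ Finset.univ.filter (fun e : Fin 13 => exampleGraph.t e = (2 : Fin 8)), (![0,0,0,0,0,0,1,-1,1,0,0,0,0] : Fin 13 → ℂ) e * (Real.cos (2 * π / Real.sqrt 3 * exampleGraph.L e) : ℂ)) - (∑ e ∈ Finset.univ.filter (fun e : Fin 13 => exampleGraph.o e = (2 : Fin 8)), (![0,0,0,0,0,0,1,-1,1,0,0,0,0] : Fin 13 → ℂ) e) = 0 := by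
      simp only [S19.sum_t2, S19.sum_o2]
      show (0:ℂ) * (Real.cos (2 * π / Real.sqrt 3 * (1:ℝ)) : ℂ) + (0:ℂ) * (Real.cos (2 * π / Real.sqrt 3 * (1:ℝ)) : ℂ) - ((0:ℂ) + (0:ℂ)) = 0
      ring
    have Ka3 : (∑ e ∈ Finset.univ.filter (fun e : Fin 13 => exampleGraph.t e = (3 : Fin 8)), (![0,0,0,0,0,0,1,-1,1,0,0,0,0] : Fin 13 → ℂ) e * (Real.cos (2 * π / Real.sqrt 3 * exampleGraph.L e) : ℂ)) - (∑ e ∈ Finset.univ.filter (fun e : Fin 13 => exampleGraph.o e = (3 : Fin 8)), (![0,0,0,0,0,0,1,-1,1,0,0,0,0] : Fin 13 → ℂ) e) = 0 := by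
      simp only [S19.sum_t3, S19.sum_o3]
      show (0:ℂ) * (Real.cos (2 * π / Real.sqrt 3 * (1:ℝ)) : ℂ) + (1:ℂ) * (Real.cos (2 * π / Real.sqrt 3 * (Real.sqrt 3:ℝ)) : ℂ) - ((0:ℂ) + (1:ℂ)) = 0
      rw [h3eq, Real.cos_two_pi]
      push_cast
      ring
    have Ka4 : (∑ e ∈ Finset.univ.filter (fun e : Fin 13 => exampleGraph.t e = (4 : Fin 8)), (![0,0,0,0,0,0,1,-1,1,0,0,0,0] : Fin 13 → ℂ) e * (Real.cos (2 * π / Real.sqrt 3 * exampleGraph.L e) : ℂ)) - (∑ e ∈ Finset.univ.filter (fun e : Fin 13 => exampleGraph.o e = (4 : Fin 8)), (![0,0,0,0,0,0,1,-1,1,0,0,0,0] : Fin 13 → ℂ) e) = 0 := by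
      simp only [S19.sum_t4, S19.sum_o4]
      show (0:ℂ) * (Real.cos (2 * π / Real.sqrt 3 * (1:ℝ)) : ℂ) + (0:ℂ) * (Real.cos (2 * π / Real.sqrt 3 * (1:ℝ)) : ℂ) + (0:ℂ) * (Real.cos (2 * π / Real.sqrt 3 * (Real.sqrt 3:ℝ)) : ℂ) - ((0:ℂ)) = 0
      ring
    have Ka5 : (∑ e ∈ Finset.univ.filter (fun e : Fin 13 => exampleGraph.t e = (5 : Fin 8)), (![0,0,0,0,0,0,1,-1,1,0,0,0,0] : Fin 13 → ℂ) e * (Real.cos (2 * π / Real.sqrt 3 * exampleGraph.L e) : ℂ)) - (∑ e ∈ Finset.univ.filter (fun e : Fin 13 => exampleGraph.o e = (5 : Fin 8)), (![0,0,0,0,0,0,1,-1,1,0,0,0,0] : Fin 13 → ℂ) e) = 0 := by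
      simp only [S19.sum_t5, S19.sum_o5]
      show (-1:ℂ) * (Real.cos (2 * π / Real.sqrt 3 * (Real.sqrt 3:ℝ)) : ℂ) + (1:ℂ) * (Real.cos (2 * π / Real.sqrt 3 * (Real.sqrt 3:ℝ)) : ℂ) - ((0:ℂ)) = 0
      ring
    have Ka6 : (∑ e ∈ Finset.univ.filter (fun e : Fin 13 => exampleGraph.t e = (6 : Fin 8)), (![0,0,0,0,0,0,1,-1,1,0,0,0,0] : Fin 13 → ℂ) e * (Real.cos (2 * π / Real.sqrt 3 * exampleGraph.L e) : ℂ)) - (∑ e ∈ Finset.univ.filter (fun e : Fin 13 => exampleGraph.o e = (6 : Fin 8)), (![0,0,0,0,0,0,1,-1,1,0,0,0,0] : Fin 13 → ℂ) e) = 0 := by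
      simp only [S19.sum_t6, S19.sum_o6]
      show (0:ℂ) * (Real.cos (2 * π / Real.sqrt 3 * (Real.sqrt 3:ℝ)) : ℂ) + (0:ℂ) * (Real.cos (2 * π / Real.sqrt 3 * (Real.sqrt 3:ℝ)) : ℂ) - ((0:ℂ)) = 0
      ring
    have Ka7 : (∑ e ∈ Finset.univ.filter (fun e : Fin 13 => exampleGraph.t e = (7 : Fin 8)), (![0,0,0,0,0,0,1,-1,1,0,0,0,0] : Fin 13 → ℂ) e * (Real.cos (2 * π / Real.sqrt 3 * exampleGraph.L e) : ℂ)) - (∑ e ∈ Finset.univ.filter (fun e : Fin 13 => exampleGraph.o e = (7 : Fin 8)), (![0,0,0,0,0,0,1,-1,1,0,0,0,0] : Fin 13 → ℂ) e) = 0 := by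
      simp only [S19.sum_t7, S19.sum_o7]
      show (0:ℂ) * (Real.cos (2 * π / Real.sqrt 3 * (π/2:ℝ)) : ℂ) - ((0:ℂ)) = 0
      ring
    have Kb0 : (∑ e ∈ Finset.univ.filter (fun e : Fin 13 => exampleGraph.t e = (0 : Fin 8)), (![0,0,0,0,0,0,0,0,0,1,-1,1,0] : Fin 13 → ℂ) e * (Real.cos (2 * π / Real.sqrt 3 * exampleGraph.L e) : ℂ)) - (∑ e ∈ Finset.univ.filter (fun e : Fin 13 => exampleGraph.o e = (0 : Fin 8)), (![0,0,0,0,0,0,0,0,0,1,-1,1,0] : Fin 13 → ℂ) e) = 0 := by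
      simp only [S19.sum_t0, S19.sum_o0]
      show (0:ℂ) - ((0:ℂ) + (0:ℂ) + (0:ℂ) + (0:ℂ)) = 0
      ring
    have Kb1 : (∑ e ∈ Finset.univ.filter (fun e : Fin 13 => exampleGraph.t e = (1 : Fin 8)), (![0,0,0,0,0,0,0,0,0,1,-1,1,0] : Fin 13 → ℂ) e * (Real.cos (2 * π / Real.sqrt 3 * exampleGraph.L e) : ℂ)) - (∑ e ∈ Finset.univ.filter (fun e : Fin 13 => exampleGraph.o e = (1 : Fin 8)), (![0,0,0,0,0,0,0,0,0,1,-1,1,0] : Fin 13 → ℂ) e) = 0 := by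
      simp only [S19.sum_t1, S19.sum_o1]
      show (0:ℂ) * (Real.cos (2 * π / Real.sqrt 3 * (1:ℝ)) : ℂ) - ((0:ℂ) + (0:ℂ) + (0:ℂ)) = 0
      ring
    have Kb2 : (∑ e ∈ Finset.univ.filter (fun e : Fin 13 => exampleGraph.t e = (2 : Fin 8)), (![0,0,0,0,0,0,0,0,0,1,-1,1,0] : Fin 13 → ℂ) e * (Real.cos (2 * π / Real.sqrt 3 * exampleGraph.L e) : ℂ)) - (∑ e ∈ Finset.univ.filter (fun e : Fin 13 => exampleGraph.o e = (2 : Fin 8)), (![0,0,0,0,0,0,0,0,0,1,-1,1,0] : Fin 13 → ℂ) e) = 0 := by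
      simp only [S19.sum_t2, S19.sum_o2]
      show (0:ℂ) * (Real.cos (2 * π / Real.sqrt 3 * (1:ℝ)) : ℂ) + (0:ℂ) * (Real.cos (2 * π / Real.sqrt 3 * (1:ℝ)) : ℂ) - ((1:ℂ) + (-1:ℂ)) = 0
      ring
    have Kb3 : (∑ e ∈ Finset.univ.filter (fun e : Fin 13 => exampleGraph.t e = (3 : Fin 8)), (![0,0,0,0,0,0,0,0,0,1,-1,1,0] : Fin 13 → ℂ) e * (Real.cos (2 * π / Real.sqrt 3 * exampleGraph.L e) : ℂ)) - (∑ e ∈ Finset.univ.filter (fun e : Fin 13 => exampleGraph.o e = (3 : Fin 8)), (![0,0,0,0,0,0,0,0,0,1,-1,1,0] : Fin 13 → ℂ) e) = 0 := by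
      simp only [S19.sum_t3, S19.sum_o3]
      show (0:ℂ) * (Real.cos (2 * π / Real.sqrt 3 * (1:ℝ)) : ℂ) + (0:ℂ) * (Real.cos (2 * π / Real.sqrt 3 * (Real.sqrt 3:ℝ)) : ℂ) - ((0:ℂ) + (0:ℂ)) = 0
      ring
    have Kb4 : (∑ e ∈ Finset.univ.filter (fun e : Fin 13 => exampleGraph.t e = (4 : Fin 8)), (![0,0,0,0,0,0,0,0,0,1,-1,1,0] : Fin 13 → ℂ) e * (Real.cos (2 * π / Real.sqrt 3 * exampleGraph.L e) : ℂ)) - (∑ e ∈ Finset.univ.filter (fun e : Fin 13 => exampleGraph.o e = (4 : Fin 8)), (![0,0,0,0,0,0,0,0,0,1,-1,1,0] : Fin 13 → ℂ) e) = 0 := by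
      simp only [S19.sum_t4, S19.sum_o4]
      show (0:ℂ) * (Real.cos (2 * π / Real.sqrt 3 * (1:ℝ)) : ℂ) + (0:ℂ) * (Real.cos (2 * π / Real.sqrt 3 * (1:ℝ)) : ℂ) + (1:ℂ) * (Real.cos (2 * π / Real.sqrt 3 * (Real.sqrt 3:ℝ)) : ℂ) - ((1:ℂ)) = 0
      rw [h3eq, Real.cos_two_pi]
      push_cast
      ring
    have Kb5 : (∑ e ∈ Finset.univ.filter (fun e : Fin 13 => exampleGraph.t e = (5 : Fin 8)), (![0,0,0,0,0,0,0,0,0,1,-1,1,0] : Fin 13 → ℂ) e * (Real.cos (2 * π / Real.sqrt 3 * exampleGraph.L e) : ℂ)) - (∑ e ∈ Finset.univ.filter (fun e : Fin 13 => exampleGraph.o e = (5 : Fin 8)), (![0,0,0,0,0,0,0,0,0,1,-1,1,0] : Fin 13 → ℂ) e) = 0 := by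
      simp only [S19.sum_t5, S19.sum_o5]
      show (0:ℂ) * (Real.cos (2 * π / Real.sqrt 3 * (Real.sqrt 3:ℝ)) : ℂ) + (0:ℂ) * (Real.cos (2 * π / Real.sqrt 3 * (Real.sqrt 3:ℝ)) : ℂ) - ((0:ℂ)) = 0
      ring
    have Kb6 : (∑ e ∈ Finset.univ.filter (fun e : Fin 13 => exampleGraph.t e = (6 : Fin 8)), (![0,0,0,0,0,0,0,0,0,1,-1,1,0] : Fin 13 → ℂ) e * (Real.cos (2 * π / Real.sqrt 3 * exampleGraph.L e) : ℂ)) - (∑ e ∈ Finset.univ.filter (fun e : Fin 13 => exampleGraph.o e = (6 : Fin 8)), (![0,0,0,0,0,0,0,0,0,1,-1,1,0] : Fin 13 → ℂ) e) = 0 := by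
      simp only [S19.sum_t6, S19.sum_o6]
      show (-1:ℂ) * (Real.cos (2 * π / Real.sqrt 3 * (Real.sqrt 3:ℝ)) : ℂ) + (1:ℂ) * (Real.cos (2 * π / Real.sqrt 3 * (Real.sqrt 3:ℝ)) : ℂ) - ((0:ℂ)) = 0
      ring
    have Kb7 : (∑ e ∈ Finset.univ.filter (fun e : Fin 13 => exampleGraph.t e = (7 : Fin 8)), (![0,0,0,0,0,0,0,0,0,1,-1,1,0] : Fin 13 → ℂ) e * (Real.cos (2 * π / Real.sqrt 3 * exampleGraph.L e) : ℂ)) - (∑ e ∈ Finset.univ.filter (fun e : Fin 13 => exampleGraph.o e = (7 : Fin 8)), (![0,0,0,0,0,0,0,0,0,1,-1,1,0] : Fin 13 → ℂ) e) = 0 := by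
      simp only [S19.sum_t7, S19.sum_o7]
      show (0:ℂ) * (Real.cos (2 * π / Real.sqrt 3 * (π/2:ℝ)) : ℂ) - ((0:ℂ)) = 0
      ring
    have hkirg1 : ∀ v : Fin 8,
        (∑ e ∈ Finset.univ.filter (fun e : Fin 13 => exampleGraph.t e = v),
            (![0,0,0,0,0,0,1,-1,1,0,0,0,0] : Fin 13 → ℂ) e * (Real.cos (2 * π / Real.sqrt 3 * exampleGraph.L e) : ℂ)) -
          (∑ e ∈ Finset.univ.filter (fun e : Fin 13 => exampleGraph.o e = v),
            (![0,0,0,0,0,0,1,-1,1,0,0,0,0] : Fin 13 → ℂ) e) = 0 := by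
      intro v
      fin_cases v
      · exact Ka0
      · exact Ka1
      · exact Ka2
      · exact Ka3
      · exact Ka4
      · exact Ka5
      · exact Ka6
      · exact Ka7
    have hkirg2 : ∀ v : Fin 8,
        (∑ e ∈ Finset.univ.filter (fun e : Fin 13 => exampleGraph.t e = v),
            (![0,0,0,0,0,0,0,0,0,1,-1,1,0] : Fin 13 → ℂ) e * (Real.cos (2 * π / Real.sqrt 3 * exampleGraph.L e) : ℂ)) -
          (∑ e ∈ Finset.univ.filter (fun e : Fin 13 => exampleGraph.o e = v),
            (![0,0,0,0,0,0,0,0,0,1,-1,1,0] : Fin 13 → ℂ) e) = 0 := by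
      intro v
      fin_cases v
      · exact Kb0
      · exact Kb1
      · exact Kb2
      · exact Kb3
      · exact Kb4
      · exact Kb5
      · exact Kb6
      · exact Kb7
    have hmem1 : (fun e : Fin 13 => S19.sf ((![0,0,0,0,0,0,1,-1,1,0,0,0,0] : Fin 13 → ℂ) e) (2 * π / Real.sqrt 3)) ∈ exampleGraph.resSet (4 * π ^ 2 / 3) :=
      S19.mem_resSet hω hlam _ Va hkirg1
    have hmem2 : (fun e : Fin 13 => S19.sf ((![0,0,0,0,0,0,0,0,0,1,-1,1,0] : Fin 13 → ℂ) e) (2 * π / Real.sqrt 3)) ∈ exampleGraph.resSet (4 * π ^ 2 / 3) :=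
      S19.mem_resSet hω hlam _ Vb hkirg2
    set g1 : exampleGraph.E → ℝ → ℂ := fun e : Fin 13 => S19.sf ((![0,0,0,0,0,0,1,-1,1,0,0,0,0] : Fin 13 → ℂ) e) (2 * π / Real.sqrt 3) with hg1def
    set g2 : exampleGraph.E → ℝ → ℂ := fun e : Fin 13 => S19.sf ((![0,0,0,0,0,0,0,0,0,1,-1,1,0] : Fin 13 → ℂ) e) (2 * π / Real.sqrt 3) with hg2def
    have hne1 : g1 ≠ 0 := by
      intro h
      have h2 : (1:ℂ) * (Real.sin (2 * π / Real.sqrt 3 * (Real.sqrt 3 / 4)) : ℂ) = 0 :=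
        congrFun (congrFun h (6 : Fin 13)) (Real.sqrt 3 / 4)
      rw [hx4, Real.sin_pi_div_two] at h2
      norm_num at h2
    have hsub : exampleGraph.resSet (4 * π ^ 2 / 3) ⊆
        (Submodule.span ℂ {g1, g2} : Submodule ℂ (exampleGraph.E → ℝ → ℂ)) := by
      intro f hf
      obtain ⟨a, hF, hvan, hkir⟩ := S19.resSet_shape hω hlam f hf
      have z0 : a 0 = 0 := S19.azero (by have h := hvan (0 : Fin 13); rwa [S19.L0] at h) hs1
      have z1 : a 1 = 0 := S19.azero (by have h := hvan (1 : Fin 13); rwa [S19.L1] at h) hs1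
      have z2 : a 2 = 0 := S19.azero (by have h := hvan (2 : Fin 13); rwa [S19.L2] at h) hs1
      have z3 : a 3 = 0 := S19.azero (by have h := hvan (3 : Fin 13); rwa [S19.L3] at h) hs1
      have z4 : a 4 = 0 := S19.azero (by have h := hvan (4 : Fin 13); rwa [S19.L4] at h) hs1
      have z5 : a 5 = 0 := S19.azero (by have h := hvan (5 : Fin 13); rwa [S19.L5] at h) hs1
      have z12 : a 12 = 0 := S19.azero (by have h := hvan (12 : Fin 13); rwa [S19.L12] at h) hsp
      have k1 := hkir (1 : Fin 8)
      simp only [S19.sum_t1, S19.sum_o1] at k1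
      rw [z0, z2] at k1
      have k3 := hkir (3 : Fin 8)
      simp only [S19.sum_t3, S19.sum_o3] at k3
      rw [S19.L6, h3eq, Real.cos_two_pi] at k3
      push_cast at k3
      rw [z3, z5] at k3
      have k2 := hkir (2 : Fin 8)
      simp only [S19.sum_t2, S19.sum_o2] at k2
      rw [z1, z2] at k2
      have k4 := hkir (4 : Fin 8)
      simp only [S19.sum_t4, S19.sum_o4] at k4
      rw [S19.L9, h3eq, Real.cos_two_pi] at k4
      push_cast at k4
      rw [z4, z5] at k4
      have ha7 : a 7 = -a 6 := by linear_combination (-1:ℂ) * k1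
      have ha8 : a 8 = a 6 := by linear_combination (-1:ℂ) * k3
      have ha10 : a 10 = -a 9 := by linear_combination (-1:ℂ) * k2
      have ha11 : a 11 = a 9 := by linear_combination (-1:ℂ) * k4
      have he : ∀ e : Fin 13, a e = a 6 * (![0,0,0,0,0,0,1,-1,1,0,0,0,0] : Fin 13 → ℂ) e + a 9 * (![0,0,0,0,0,0,0,0,0,1,-1,1,0] : Fin 13 → ℂ) e := by
        intro e; fin_cases e
        · show a 0 = a 6 * 0 + a 9 * 0
          linear_combination z0
        · show a 1 = a 6 * 0 + a 9 * 0
          linear_combination z1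
        · show a 2 = a 6 * 0 + a 9 * 0
          linear_combination z2
        · show a 3 = a 6 * 0 + a 9 * 0
          linear_combination z3
        · show a 4 = a 6 * 0 + a 9 * 0
          linear_combination z4
        · show a 5 = a 6 * 0 + a 9 * 0
          linear_combination z5
        · show a 6 = a 6 * 1 + a 9 * 0
          ring
        · show a 7 = a 6 * (-1) + a 9 * 0
          linear_combination ha7
        · show a 8 = a 6 * 1 + a 9 * 0
          linear_combination ha8
        · show a 9 = a 6 * 0 + a 9 * 1
          ring
        · show a 10 = a 6 * 0 + a 9 * (-1)
          linear_combination ha10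
        · show a 11 = a 6 * 0 + a 9 * 1
          linear_combination ha11
        · show a 12 = a 6 * 0 + a 9 * 0
          linear_combination z12
      apply Submodule.mem_span_pair.mpr
      refine ⟨a 6, a 9, ?_⟩
      rw [hF]
      funext e x
      show a 6 * ((![0,0,0,0,0,0,1,-1,1,0,0,0,0] : Fin 13 → ℂ) e * (Real.sin (2 * π / Real.sqrt 3 * x) : ℂ)) +
          a 9 * ((![0,0,0,0,0,0,0,0,0,1,-1,1,0] : Fin 13 → ℂ) e * (Real.sin (2 * π / Real.sqrt 3 * x) : ℂ)) =
        a e * (Real.sin (2 * π / Real.sqrt 3 * x) : ℂ)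
      rw [he e]
      ring
    have hpairsub : ({g1, g2} : Set (exampleGraph.E → ℝ → ℂ)) ⊆ exampleGraph.resSet (4 * π ^ 2 / 3) := by
      intro w hw
      rcases hw with h | h
      · rw [h]; exact hmem1
      · rw [Set.mem_singleton_iff.mp h]; exact hmem2
    have hspan : Submodule.span ℂ (exampleGraph.resSet (4 * π ^ 2 / 3)) = Submodule.span ℂ {g1, g2} :=
      le_antisymm (Submodule.span_le.mpr hsub) (Submodule.span_mono hpairsub)
    have hli : LinearIndependent ℂ ![g1, g2] := by
      rw [LinearIndependent.pair_iff]
      intro s t hst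
      have h6 : s * ((1:ℂ) * (Real.sin (2 * π / Real.sqrt 3 * (Real.sqrt 3 / 4)) : ℂ)) +
          t * ((0:ℂ) * (Real.sin (2 * π / Real.sqrt 3 * (Real.sqrt 3 / 4)) : ℂ)) = 0 :=
        congrFun (congrFun hst (6 : Fin 13)) (Real.sqrt 3 / 4)
      have h9 : s * ((0:ℂ) * (Real.sin (2 * π / Real.sqrt 3 * (Real.sqrt 3 / 4)) : ℂ)) +
          t * ((1:ℂ) * (Real.sin (2 * π / Real.sqrt 3 * (Real.sqrt 3 / 4)) : ℂ)) = 0 :=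
        congrFun (congrFun hst (9 : Fin 13)) (Real.sqrt 3 / 4)
      rw [hx4, Real.sin_pi_div_two] at h6 h9
      norm_num at h6 h9
      exact ⟨h6, h9⟩
    have hrange : Set.range ![g1, g2] = {g1, g2} := by
      ext w
      simp only [Set.mem_range, Fin.exists_fin_two, Matrix.cons_val_zero, Matrix.cons_val_one,
        Matrix.head_cons, Set.mem_insert_iff, Set.mem_singleton_iff]
      constructor
      · rintro (h | h) <;> [exact Or.inl h.symm; exact Or.inr h.symm]
      · rintro (h | h) <;> [exact Or.inl h.symm; exact Or.inr h.symm]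
    refine ⟨?_, ?_⟩
    · show Module.finrank ℂ (Submodule.span ℂ (exampleGraph.resSet (4 * π ^ 2 / 3))) = 2
      rw [hspan, ← hrange, finrank_span_eq_card hli]
      simp
    · show exampleGraph.resSet (4 * π ^ 2 / 3) ≠ {0}
      intro h
      rw [h] at hmem1
      exact hne1 (Set.mem_singleton_iff.mp hmem1)
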